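/- Let A be an n×n complex matrix and P = x⊗f a rank-one idempotent (f(x)=1). Then the matrix AP + PA has a nonzero repeated eigenvalue if and only if f(Ax) ≠ 0 and f(A²x) = 0. -/

import Mathlib

open Matrix Polynomial

lemma my_eval_charpoly {n : ℕ} (M : Matrix (Fin n) (Fin n) ℂ) (t : ℂ) :
    M.charpoly.eval t = (t • (1 : Matrix (Fin n) (Fin n) ℂ) - M).det := by
  rw [Matrix.charpoly, ← coe_evalRingHom, RingHom.map_det]
  congr 1
  ext i j
  by_cases h : i = j
  · subst h; simp [charmatrix_apply_eq, Matrix.one_apply]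
  · simp [charmatrix_apply_ne _ _ _ h, Matrix.one_apply, h]

lemma det_key {n : ℕ} (A : Matrix (Fin n) (Fin n) ℂ) (x f : Fin n → ℂ) (t : ℂ) (ht : t ≠ 0) :
    (t • (1 : Matrix (Fin n) (Fin n) ℂ) - (A * vecMulVec x f + vecMulVec x f * A)).det
      = t ^ n * ((1 - t⁻¹ * (f ⬝ᵥ A.mulVec x)) ^ 2
          - t⁻¹ ^ 2 * ((f ⬝ᵥ x) * (f ⬝ᵥ (A * A).mulVec x))) := by
  set U : Matrix (Fin n) (Fin 2) ℂ := Matrix.of fun i j => if j = 0 then A.mulVec x i else x i with hU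
  set V : Matrix (Fin 2) (Fin n) ℂ := Matrix.of fun i j => if i = 0 then f j else vecMul f A j with hV
  have hM : A * vecMulVec x f + vecMulVec x f * A = U * V := by
    ext i j
    simp only [Matrix.add_apply, Matrix.mul_apply, vecMulVec_apply, hU, hV, Matrix.of_apply,
      Fin.sum_univ_two, if_pos rfl]
    norm_num
    simp only [mulVec, vecMul, dotProduct, Finset.sum_mul, Finset.mul_sum]
    rw [← Finset.sum_add_distrib, ← Finset.sum_add_distrib]
    exact Finset.sum_congr rfl fun k _ => by ring
  have hVU00 : (V * U) 0 0 = f ⬝ᵥ A.mulVec x := by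
    simp [Matrix.mul_apply, hU, hV, dotProduct]
  have hVU01 : (V * U) 0 1 = f ⬝ᵥ x := by
    simp [Matrix.mul_apply, hU, hV, dotProduct]
  have hVU10 : (V * U) 1 0 = f ⬝ᵥ (A * A).mulVec x := by
    simp only [Matrix.mul_apply, hU, hV, Matrix.of_apply]
    rw [← Matrix.mulVec_mulVec, dotProduct_mulVec]
    simp [dotProduct]
  have hVU11 : (V * U) 1 1 = f ⬝ᵥ A.mulVec x := by
    simp only [Matrix.mul_apply, hU, hV, Matrix.of_apply]
    rw [dotProduct_mulVec]
    simp [dotProduct]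
  have key : t • (1 : Matrix (Fin n) (Fin n) ℂ) - U * V
      = t • ((1 : Matrix (Fin n) (Fin n) ℂ) + U * ((-t⁻¹) • V)) := by
    rw [Matrix.mul_smul, smul_add, smul_smul]
    rw [mul_neg, mul_inv_cancel₀ ht]
    simp [sub_eq_add_neg]
  rw [hM, key, Matrix.det_smul, Fintype.card_fin, det_one_add_mul_comm, Matrix.smul_mul]
  rw [Matrix.det_fin_two]
  simp only [Matrix.add_apply, Matrix.smul_apply, Matrix.one_apply, hVU00, hVU01, hVU10, hVU11]
  norm_num
  ring_nf
  tauto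

lemma charpoly_key {m : ℕ} (A : Matrix (Fin (m+2)) (Fin (m+2)) ℂ) (x f : Fin (m+2) → ℂ)
    (hxf : f ⬝ᵥ x = 1) (s : ℂ) (hs : s ^ 2 = f ⬝ᵥ (A * A).mulVec x) :
    (A * vecMulVec x f + vecMulVec x f * A).charpoly
      = X ^ m * ((X - C (f ⬝ᵥ A.mulVec x + s)) * (X - C (f ⬝ᵥ A.mulVec x - s))) := by
  set a := f ⬝ᵥ A.mulVec x
  set b := f ⬝ᵥ (A * A).mulVec x
  apply Polynomial.eq_of_infinite_eval_eq
  apply Set.Infinite.mono (s := {t : ℂ | t ≠ 0})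
  · intro t ht
    simp only [Set.mem_setOf_eq] at ht ⊢
    rw [my_eval_charpoly, det_key A x f t ht, hxf]
    simp only [eval_mul, eval_pow, eval_X, eval_sub, eval_C]
    have hs' : s ^ 2 = f ⬝ᵥ (A * A).mulVec x := hs
    rw [← hs']
    have h2 : t ^ (m + 2) = t ^ m * t ^ 2 := by ring
    rw [h2]
    field_simp
    ring_nf
    have ha' : f ⬝ᵥ A.mulVec x = a := rfl
    linear_combination (f ⬝ᵥ A.mulVec x + a - 2 * t) * ha'
  · exact Set.Finite.infinite_compl (Set.finite_singleton 0)

open Matrix in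
theorem stmt_3 (n : ℕ) (A : Matrix (Fin n) (Fin n) ℂ) (x f : Fin n → ℂ)
    (hxf : f ⬝ᵥ x = 1) :
    (∃ μ : ℂ, μ ≠ 0 ∧
        2 ≤ (A * Matrix.vecMulVec x f + Matrix.vecMulVec x f * A).charpoly.roots.count μ)
      ↔ f ⬝ᵥ A.mulVec x ≠ 0 ∧ f ⬝ᵥ (A ^ 2).mulVec x = 0 := by
  match n, A, x, f, hxf with
  | 0, A, x, f, hxf => simp [dotProduct] at hxf
  | 1, A, x, f, hxf =>
    have hxf1 : f 0 * x 0 = 1 := by simpa [dotProduct] using hxf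
    constructor
    · rintro ⟨μ, hμ, hc⟩
      exfalso
      have h1 := (Multiset.count_le_card μ
        (A * Matrix.vecMulVec x f + Matrix.vecMulVec x f * A).charpoly.roots).trans
        (Polynomial.card_roots' _)
      rw [Matrix.charpoly_natDegree_eq_dim, Fintype.card_fin] at h1
      omega
    · rintro ⟨ha, hb⟩
      exfalso
      apply ha
      have h2 : f ⬝ᵥ (A ^ 2).mulVec x = (f ⬝ᵥ A.mulVec x) ^ 2 := by
        simp only [dotProduct, mulVec, Fin.sum_univ_one, pow_two, Matrix.mul_apply, dotProduct]
        linear_combination (-(f 0 * A 0 0 ^ 2 * x 0) * (1 + x 0) + f 0 * A 0 0 ^ 2 * x 0 ^ 2) * hxf1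
      rw [h2] at hb
      exact pow_eq_zero_iff (by norm_num) |>.mp hb
  | (m + 2), A, x, f, hxf =>
    set a := f ⬝ᵥ A.mulVec x with ha
    have hAA : f ⬝ᵥ (A ^ 2).mulVec x = f ⬝ᵥ (A * A).mulVec x := by rw [pow_two]
    set b := f ⬝ᵥ (A * A).mulVec x with hb
    obtain ⟨s, hs⟩ := IsAlgClosed.exists_pow_nat_eq b (n := 2) (by norm_num)
    rw [hAA]
    rw [charpoly_key A x f hxf s hs]
    have hmono : ((X : ℂ[X]) ^ m * ((X - C (a + s)) * (X - C (a - s)))) ≠ 0 :=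
      ((monic_X_pow m).mul ((monic_X_sub_C _).mul (monic_X_sub_C _))).ne_zero
    have hroots : ((X : ℂ[X]) ^ m * ((X - C (a + s)) * (X - C (a - s)))).roots
        = m • ({0} : Multiset ℂ) + ({a + s} + {a - s}) := by
      rw [Polynomial.roots_mul hmono, Polynomial.roots_mul
          (mul_ne_zero (X_sub_C_ne_zero _) (X_sub_C_ne_zero _)),
        Polynomial.roots_pow, Polynomial.roots_X, Polynomial.roots_X_sub_C,
        Polynomial.roots_X_sub_C]
    rw [hroots]
    constructor
    · rintro ⟨μ, hμ, hc⟩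
      simp only [Multiset.count_add, Multiset.count_nsmul, Multiset.count_singleton] at hc
      rw [if_neg hμ] at hc
      have e1 : μ = a + s := by
        by_contra h'
        rw [if_neg h'] at hc
        split_ifs at hc <;> omega
      have e2 : μ = a - s := by
        by_contra h'
        rw [if_neg h'] at hc
        split_ifs at hc <;> omega
      have hs0 : s = 0 := by linear_combination (e1.symm.trans e2) / 2
      refine ⟨?_, ?_⟩
      · intro ha0
        apply hμ
        rw [e1, hs0, ha0, add_zero]
      · rw [← hs, hs0]
        ring
    · rintro ⟨ha0, hb0⟩
      refine ⟨a, ha0, ?_⟩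
      have hs0 : s = 0 := by
        have h0 : s ^ 2 = 0 := hs.trans hb0
        exact pow_eq_zero_iff (by norm_num) |>.mp h0
      simp only [Multiset.count_add, Multiset.count_nsmul, Multiset.count_singleton, hs0,
        add_zero, sub_zero, if_pos rfl, if_neg ha0, mul_zero, zero_add]
      norm_num
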